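/- Let G be a finite group with trivial-intersection Sylow p-subgroups, Q a Sylow p-subgroup, and x ∈ Q \ {1}. Then the intersection of the G-conjugacy class of x with Q equals the N_G(Q)-conjugacy class of x, i.e., x^G ∩ Q = x^{N_G(Q)}. -/

import Mathlib

/-- In a finite group with trivial-intersection Sylow `p`-subgroups, for a nontrivial
`x ∈ Q` the intersection of the `G`-conjugacy class of `x` with `Q` equals the
`N_G(Q)`-conjugacy class of `x`. -/
theorem conjClass_inter_eq_normalizer_class_of_TI {G : Type*} [Group G] [Finite G] (p : ℕ)
    [Fact p.Prime]
    (hTI : ∀ Q₁ Q₂ : Sylow p G, (Q₁ : Subgroup G) ≠ Q₂ → (Q₁ : Subgroup G) ⊓ Q₂ = ⊥)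
    (Q : Sylow p G) (x : G) (hx : x ∈ Q) (hx1 : x ≠ 1) :
    {y : G | IsConj x y} ∩ (Q : Set G) =
      {y : G | ∃ h ∈ Subgroup.normalizer ((Q : Subgroup G) : Set G), h⁻¹ * x * h = y} := by
  ext y
  simp only [Set.mem_inter_iff, Set.mem_setOf_eq, SetLike.mem_coe, isConj_iff]
  constructor
  · rintro ⟨⟨c, hc⟩, hyQ⟩
    have hy1 : y ≠ 1 := by
      rintro rfl
      exact hx1 (by simpa [mul_inv_eq_one, eq_comm, mul_eq_one_iff_eq_inv] using hc)
    have hyc : y ∈ ((c • Q : Sylow p G) : Subgroup G) := by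
      rw [Sylow.coe_subgroup_smul, Subgroup.mem_smul_pointwise_iff_exists]
      exact ⟨x, hx, by simpa [MulAut.conj_apply] using hc⟩
    have heq : (c • Q : Sylow p G) = Q := by
      by_contra hne
      have hne' : ((c • Q : Sylow p G) : Subgroup G) ≠ Q := fun h => hne (Sylow.ext h)
      have hmem : y ∈ (((c • Q : Sylow p G) : Subgroup G) ⊓ Q) := ⟨hyc, hyQ⟩
      rw [hTI _ _ hne'] at hmem
      exact hy1 (by simpa using hmem)
    have hc' : c ∈ Subgroup.normalizer ((Q : Subgroup G) : Set G) :=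
      Sylow.smul_eq_iff_mem_normalizer.mp heq
    exact ⟨c⁻¹, inv_mem hc', by simpa [mul_assoc] using hc⟩
  · rintro ⟨h, hh, rfl⟩
    refine ⟨⟨h⁻¹, by group⟩, ?_⟩
    have := (Subgroup.mem_normalizer_iff.mp (inv_mem hh) x).mp hx
    simp only [inv_inv, mul_assoc] at this ⊢
    exact this
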